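/- arXiv:1307.5930 — 5 statements merged into one kernel-verified Lean document; each statement's English description precedes it below -/
import Mathlib

section
/- Let A and B be 3×3 real positive-definite symmetric matrices such that B = R A Rᵀ for some 3×3 real orthogonal matrix R. Then there exist Q ∈ SO(3) and vectors a, n ∈ ℝ³ with Q B − A = a ⊗ n if and only if there exists a unit vector ê ∈ ℝ³ with B = (−I + 2 ê⊗ê) A (−I + 2 ê⊗ê). -/
open Matrix

/-- The 180° rotation matrix `-I + 2 ê⊗ê` for a unit vector `ê`. -/
noncomputable def reflMat (e : Fin 3 → ℝ) : Matrix (Fin 3) (Fin 3) ℝ :=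
  -1 + (2 : ℝ) • Matrix.vecMulVec e e

/-- Membership in SO(3): orthogonal with determinant 1. -/
def SO3 (R : Matrix (Fin 3) (Fin 3) ℝ) : Prop := R * Rᵀ = 1 ∧ R.det = 1

section vmv
variable (M : Matrix (Fin 3) (Fin 3) ℝ) (a b c d x : Fin 3 → ℝ) (r : ℝ)

lemma my_mul_vmv : M * vecMulVec a b = vecMulVec (M *ᵥ a) b := by
  ext i j; simp [vecMulVec_apply, mul_apply, mulVec, dotProduct, Finset.sum_mul]; exact Finset.sum_congr rfl (by intros; ring)

lemma my_vmv_mul : vecMulVec a b * M = vecMulVec a (Mᵀ *ᵥ b) := by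
  ext i j; simp [vecMulVec_apply, mul_apply, mulVec, dotProduct, Finset.mul_sum, transpose_apply]
  congr 1; ext k; ring

lemma my_vmv_mul_vmv : vecMulVec a b * vecMulVec c d = (b ⬝ᵥ c) • vecMulVec a d := by
  ext i j; simp [vecMulVec_apply, mul_apply, dotProduct, Finset.sum_mul, Finset.mul_sum]
  congr 1; ext k; ring

lemma my_trace_vmv : trace (vecMulVec a b) = a ⬝ᵥ b := by
  simp [trace, vecMulVec_apply, dotProduct, diag]

lemma my_transpose_vmv : (vecMulVec a b)ᵀ = vecMulVec b a := by
  ext i j; simp [vecMulVec_apply, transpose_apply, mul_comm]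

lemma my_vmv_smul_left : vecMulVec (r • a) b = r • vecMulVec a b := by
  ext i j; simp [vecMulVec_apply, mul_assoc]

lemma my_vmv_smul_right : vecMulVec a (r • b) = r • vecMulVec a b := by
  ext i j; simp [vecMulVec_apply]; ring

lemma my_vmv_add_left : vecMulVec (a + c) b = vecMulVec a b + vecMulVec c b := by
  ext i j; simp [vecMulVec_apply]; ring

lemma my_vmv_add_right : vecMulVec a (b + d) = vecMulVec a b + vecMulVec a d := by
  ext i j; simp [vecMulVec_apply]; ring

lemma my_vmv_mulVec : vecMulVec a b *ᵥ x = (b ⬝ᵥ x) • a := by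
  ext i; simp [vecMulVec_apply, mulVec, dotProduct, Finset.sum_mul]
  exact Finset.sum_congr rfl (by intros; ring)
end vmv

section refl
variable (M : Matrix (Fin 3) (Fin 3) ℝ) (e d : Fin 3 → ℝ) (c : ℝ)

lemma reflMat_symm : (reflMat e)ᵀ = reflMat e := by
  simp [reflMat, transpose_add, transpose_smul, my_transpose_vmv]

lemma reflMat_mul (X : Matrix (Fin 3) (Fin 3) ℝ) :
    reflMat e * X = -X + (2:ℝ) • (vecMulVec e e * X) := by
  rw [reflMat, add_mul, neg_one_mul, smul_mul_assoc]

lemma mul_reflMat (X : Matrix (Fin 3) (Fin 3) ℝ) :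
    X * reflMat e = -X + (2:ℝ) • (X * vecMulVec e e) := by
  rw [reflMat, mul_add, mul_neg_one, mul_smul_comm]

lemma reflMat_sq (he : e ⬝ᵥ e = 1) : reflMat e * reflMat e = 1 := by
  have hVV : vecMulVec e e * vecMulVec e e = vecMulVec e e := by
    rw [my_vmv_mul_vmv, he, one_smul]
  rw [mul_reflMat, reflMat_mul, hVV, reflMat, neg_add, smul_add, smul_neg, smul_smul]
  norm_num
  module

lemma reflMat_det (he : e ⬝ᵥ e = 1) : (reflMat e).det = 1 := by
  have h1 : reflMat e = -(1 + vecMulVec ((-2:ℝ) • e) e) := by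
    rw [my_vmv_smul_left, reflMat]; module
  rw [h1, vecMulVec_eq Unit, det_neg, det_one_add_replicateCol_mul_replicateRow]
  simp [dotProduct_smul, he]
  norm_num

lemma refl_conj (hsymm : Mᵀ = M) (he : e ⬝ᵥ e = 1) (hd : e ⬝ᵥ d = 0)
    (hMe : M *ᵥ e = c • e + d) :
    reflMat e * M * reflMat e = M - (2:ℝ) • (vecMulVec d e + vecMulVec e d) := by
  set V := vecMulVec e e with hV
  have hVM : V * M = c • V + vecMulVec e d := by
    rw [hV, my_vmv_mul, hsymm, hMe, my_vmv_add_right, my_vmv_smul_right]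
  have hMV : M * V = c • V + vecMulVec d e := by
    rw [hV, my_mul_vmv, hMe, my_vmv_add_left, my_vmv_smul_left]
  have hVV : V * V = V := by rw [hV, my_vmv_mul_vmv, he, one_smul]
  have hVde : V * vecMulVec d e = 0 := by
    rw [hV, my_vmv_mul_vmv, hd, zero_smul]
  calc reflMat e * M * reflMat e
      = -(reflMat e * M) + (2:ℝ) • ((reflMat e * M) * V) := mul_reflMat _ _
    _ = -(-M + (2:ℝ) • (V * M)) + (2:ℝ) • ((-M + (2:ℝ) • (V * M)) * V) := by
        rw [reflMat_mul]
    _ = M - (2:ℝ) • (V * M) + (2:ℝ) • (-(M * V) + (2:ℝ) • (V * (M * V))) := by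
        rw [add_mul, neg_mul, smul_mul_assoc, mul_assoc]; module
    _ = M - (2:ℝ) • (c • V + vecMulVec e d)
        + (2:ℝ) • (-(c • V + vecMulVec d e) + (2:ℝ) • (c • V)) := by
        rw [hVM, hMV]
        congr 2
        rw [mul_add, mul_smul_comm, hVV, hVde, add_zero]
    _ = M - (2:ℝ) • (vecMulVec d e + vecMulVec e d) := by module
end refl

section aux
variable (M : Matrix (Fin 3) (Fin 3) ℝ) (e a b : Fin 3 → ℝ)

lemma my_vmv_sub_left (c : Fin 3 → ℝ) :
    vecMulVec (a - c) b = vecMulVec a b - vecMulVec c b := by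
  ext i j; simp [vecMulVec_apply]; ring

lemma my_vmv_sub_right (c : Fin 3 → ℝ) :
    vecMulVec a (b - c) = vecMulVec a b - vecMulVec a c := by
  ext i j; simp [vecMulVec_apply]; ring

lemma refl_conj' (hsymm : Mᵀ = M) (he : e ⬝ᵥ e = 1) :
    reflMat e * M * reflMat e
      = M - (2:ℝ) • (vecMulVec (M *ᵥ e) e + vecMulVec e (M *ᵥ e))
        + ((4:ℝ) * (e ⬝ᵥ M *ᵥ e)) • vecMulVec e e := by
  have hd : e ⬝ᵥ (M *ᵥ e - (e ⬝ᵥ M *ᵥ e) • e) = 0 := by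
    rw [dotProduct_sub, dotProduct_smul, he]; simp
  have h := refl_conj M e (M *ᵥ e - (e ⬝ᵥ M *ᵥ e) • e) (e ⬝ᵥ M *ᵥ e) hsymm he hd (by module)
  rw [h, my_vmv_sub_left, my_vmv_sub_right, my_vmv_smul_left, my_vmv_smul_right]
  module
end aux

lemma backward_dir (A : Matrix (Fin 3) (Fin 3) ℝ) (hA : A.PosDef) (e : Fin 3 → ℝ)
    (he : e ⬝ᵥ e = 1) :
    ∃ (Q : Matrix (Fin 3) (Fin 3) ℝ) (a n : Fin 3 → ℝ),
      SO3 Q ∧ Q * (reflMat e * A * reflMat e) - A = vecMulVec a n := by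
  have hAs : Aᵀ = A := by
    have := hA.isHermitian.eq; rwa [conjTranspose_eq_transpose_of_trivial] at this
  have hdet : IsUnit A.det := isUnit_iff_ne_zero.mpr (ne_of_gt hA.det_pos)
  set B : Matrix (Fin 3) (Fin 3) ℝ := reflMat e * A * reflMat e with hBdef
  have hBs : Bᵀ = B := by
    rw [hBdef, transpose_mul, transpose_mul, reflMat_symm, hAs, mul_assoc]
  have hBdet : B.det = A.det := by
    rw [hBdef, det_mul, det_mul, reflMat_det e he]; ring
  have hBdetu : IsUnit B.det := hBdet ▸ hdet
  -- the vector w = A⁻¹ e and α = |w|²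
  set w : Fin 3 → ℝ := A⁻¹ *ᵥ e with hw
  have hAw : A *ᵥ w = e := by
    rw [hw, mulVec_mulVec, mul_nonsing_inv _ hdet, one_mulVec]
  have hwne : w ≠ 0 := by
    intro h0
    have : e = 0 := by rw [← hAw, h0, mulVec_zero]
    rw [this] at he; simp at he
  set α : ℝ := w ⬝ᵥ w with hα
  have hαne : α ≠ 0 := fun h => hwne (dotProduct_self_eq_zero.mp h)
  set a : Fin 3 → ℝ := (2 / α) • w - (2:ℝ) • (A *ᵥ e) with ha
  set F : Matrix (Fin 3) (Fin 3) ℝ := A + vecMulVec a e with hF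
  -- A *ᵥ a
  have hAa : A *ᵥ a = (2 / α) • e - (2:ℝ) • ((A * A) *ᵥ e) := by
    rw [ha, mulVec_sub, mulVec_smul, mulVec_smul, hAw, mulVec_mulVec]
  -- scalar products
  have hwAe : w ⬝ᵥ (A *ᵥ e) = 1 := by
    rw [dotProduct_mulVec, ← hAs, ← mulVec_transpose, transpose_transpose, hAw, he]
  have hsd : ∀ x y : Fin 3 → ℝ, x ⬝ᵥ (A *ᵥ y) = (A *ᵥ x) ⬝ᵥ y := by
    intro x y
    rw [dotProduct_mulVec, ← mulVec_transpose, hAs]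
  have hAeAe : (A *ᵥ e) ⬝ᵥ (A *ᵥ e) = e ⬝ᵥ ((A * A) *ᵥ e) := by
    rw [← mulVec_mulVec, hsd e (A *ᵥ e)]
  have haa : a ⬝ᵥ a = 4 * (e ⬝ᵥ ((A * A) *ᵥ e)) - 4 / α := by
    rw [ha]
    simp only [dotProduct_sub, sub_dotProduct, dotProduct_smul, smul_dotProduct,
      smul_eq_mul]
    rw [dotProduct_comm (A *ᵥ e) w] at *
    rw [hwAe, hAeAe, ← hα]
    field_simp
    ring
  -- the key identity FᵀF = B * B
  have hFt : Fᵀ = A + vecMulVec e a := by rw [hF, transpose_add, hAs, my_transpose_vmv]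
  have hAAs : (A * A)ᵀ = A * A := by rw [transpose_mul, hAs]
  have hBB : B * B = A * A
      - (2:ℝ) • (vecMulVec ((A * A) *ᵥ e) e + vecMulVec e ((A * A) *ᵥ e))
      + ((4:ℝ) * (e ⬝ᵥ (A * A) *ᵥ e)) • vecMulVec e e := by
    have h1 : B * B = reflMat e * (A * A) * reflMat e := by
      have assoc1 : reflMat e * A * reflMat e * (reflMat e * A * reflMat e)
          = reflMat e * A * (reflMat e * reflMat e) * (A * reflMat e) := by
        simp only [mul_assoc]
      rw [hBdef, assoc1, reflMat_sq e he, mul_one]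
      simp only [mul_assoc]
    rw [h1, refl_conj' (A * A) e hAAs he]
  have hFtF : Fᵀ * F = B * B := by
    rw [hFt, hF, add_mul, mul_add, mul_add, my_mul_vmv, my_vmv_mul, my_vmv_mul_vmv, hAs,
      hAa, haa, hBB, my_vmv_sub_left, my_vmv_sub_right, my_vmv_smul_left, my_vmv_smul_left,
      my_vmv_smul_right, my_vmv_smul_right]
    module
  -- determinant of F
  have hwa : e ⬝ᵥ (A⁻¹ *ᵥ a) = 0 := by
    have hAinvs : A⁻¹ᵀ = A⁻¹ := by rw [transpose_nonsing_inv, hAs]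
    have : e ⬝ᵥ (A⁻¹ *ᵥ a) = w ⬝ᵥ a := by
      rw [dotProduct_mulVec, ← hAinvs, ← mulVec_transpose, transpose_transpose, hw]
    rw [this, ha, dotProduct_sub, dotProduct_smul, ← hα, dotProduct_smul, smul_eq_mul,
      smul_eq_mul, hwAe]
    field_simp
    norm_num
  have hFdet : F.det = A.det := by
    have hsplit : F = A * (1 + vecMulVec (A⁻¹ *ᵥ a) e) := by
      rw [mul_add, mul_one, my_mul_vmv, mulVec_mulVec, mul_nonsing_inv _ hdet, one_mulVec,
        hF]
    rw [hsplit, det_mul, vecMulVec_eq Unit, det_one_add_replicateCol_mul_replicateRow, hwa]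
    simp
  have hFdetu : IsUnit F.det := hFdet ▸ hdet
  -- define Q
  refine ⟨F * B⁻¹, a, e, ⟨?_, ?_⟩, ?_⟩
  · -- orthogonality
    have hBinvT : B⁻¹ᵀ = B⁻¹ := by rw [transpose_nonsing_inv, hBs]
    have htFu : IsUnit (Fᵀ).det := by rwa [det_transpose]
    have hstep : (F * B⁻¹) * (F * B⁻¹)ᵀ = F * ((B⁻¹ * B⁻¹ᵀ) * Fᵀ) := by
      rw [transpose_mul]; simp only [mul_assoc]
    have hBB_inv : B⁻¹ * B⁻¹ = F⁻¹ * (Fᵀ)⁻¹ := by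
      rw [← Matrix.mul_inv_rev, ← hFtF, Matrix.mul_inv_rev]
    rw [hstep, hBinvT, hBB_inv, mul_assoc (F⁻¹), nonsing_inv_mul _ htFu, mul_one,
      mul_nonsing_inv _ hFdetu]
  · -- determinant
    rw [det_mul, det_nonsing_inv, hFdet, hBdet]
    simp [Ring.inverse_eq_inv']
    exact mul_inv_cancel₀ (ne_of_gt hA.det_pos)
  · -- rank one
    rw [mul_assoc, nonsing_inv_mul _ hBdetu, mul_one, hF, add_sub_cancel_left]

section keydet
open scoped Matrix

lemma my_cross_lagrange (m n : Fin 3 → ℝ) :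
    (m ⨯₃ n) ⬝ᵥ (m ⨯₃ n) = (m ⬝ᵥ m) * (n ⬝ᵥ n) - (m ⬝ᵥ n) ^ 2 := by
  simp [cross_apply, dotProduct, Fin.sum_univ_three]
  ring

lemma my_dot_cross_left (m n : Fin 3 → ℝ) : m ⬝ᵥ (m ⨯₃ n) = 0 := by
  simp [cross_apply, dotProduct, Fin.sum_univ_three]
  ring

lemma my_dot_cross_right (m n : Fin 3 → ℝ) : n ⬝ᵥ (m ⨯₃ n) = 0 := by
  simp [cross_apply, dotProduct, Fin.sum_univ_three]
  ring

lemma my_span_vec (m n x : Fin 3 → ℝ) (hm : x ⬝ᵥ m = 0) (hn : x ⬝ᵥ n = 0)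
    (hz : x ⬝ᵥ (m ⨯₃ n) = 0) (hzz : (m ⨯₃ n) ⬝ᵥ (m ⨯₃ n) ≠ 0) : x = 0 := by
  have key : ∀ i, ((m ⨯₃ n) ⬝ᵥ (m ⨯₃ n)) * x i
      = (x ⬝ᵥ (m ⨯₃ n)) * (m ⨯₃ n) i + (x ⬝ᵥ n) * ((m ⨯₃ n) ⨯₃ m) i
        - (x ⬝ᵥ m) * ((m ⨯₃ n) ⨯₃ n) i := by
    intro i
    fin_cases i <;>
      (simp [cross_apply, dotProduct, Fin.sum_univ_three]; ring)
  funext i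
  have h := key i
  rw [hm, hn, hz] at h
  simp only [zero_mul, add_zero, sub_zero, Pi.zero_apply] at h ⊢
  exact (mul_eq_zero.mp h).resolve_left hzz

set_option maxRecDepth 10000 in
set_option maxHeartbeats 2000000 in
lemma key_det (T : Matrix (Fin 3) (Fin 3) ℝ) (m n : Fin 3 → ℝ) (hs : Tᵀ = T)
    (h1 : m ⬝ᵥ n = 0) :
    2 * (m ⬝ᵥ (T *ᵥ (m ⨯₃ n))) * (n ⬝ᵥ (T *ᵥ (m ⨯₃ n)))
      = ((m ⨯₃ n) ⬝ᵥ (m ⨯₃ n)) * ((T + vecMulVec m n + vecMulVec n m).det - T.det)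
        + (2 * (m ⬝ᵥ (T *ᵥ n)) + (m ⬝ᵥ m) * (n ⬝ᵥ n)) * ((m ⨯₃ n) ⬝ᵥ (T *ᵥ (m ⨯₃ n))) := by
  have h10 : T 1 0 = T 0 1 := by simpa using congrFun (congrFun hs 0) 1
  have h20 : T 2 0 = T 0 2 := by simpa using congrFun (congrFun hs 0) 2
  have h21 : T 2 1 = T 1 2 := by simpa using congrFun (congrFun hs 1) 2
  have h1' : m 0 * n 0 + m 1 * n 1 + m 2 * n 2 = 0 := by
    simpa [dotProduct, Fin.sum_univ_three] using h1
  simp only [det_fin_three, dotProduct, mulVec, cross_apply, vecMulVec_apply,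
    Fin.sum_univ_three, Matrix.add_apply, Matrix.cons_val_zero, Matrix.cons_val_one,
    Matrix.head_cons, Matrix.cons_val_two, Matrix.tail_cons]
  rw [h10, h20, h21]
  linear_combination (-1 : ℝ) * (1*T 2 2*m 1*m 1*m 2*n 0*n 0*n 2 + 1*T 2 2*m 1*m 1*m 1*n 0*n 0*n 1 + (-2)*T 2 2*m 0*m 1*m 2*n 0*n 1*n 2 + (-2)*T 2 2*m 0*m 1*m 1*n 0*n 1*n 1 + 1*T 2 2*m 0*m 1*m 1*n 0*n 0*n 0 + 1*T 2 2*m 0*m 0*m 2*n 1*n 1*n 2 + 1*T 2 2*m 0*m 0*m 1*n 1*n 1*n 1 + (-2)*T 2 2*m 0*m 0*m 1*n 0*n 0*n 1 + 1*T 2 2*m 0*m 0*m 0*n 0*n 1*n 1 + (-2)*T 1 2*m 1*m 2*m 2*n 0*n 0*n 2 + (-2)*T 1 2*m 1*m 1*m 2*n 0*n 0*n 1 + 2*T 1 2*m 0*m 2*m 2*n 0*n 1*n 2 + 2*T 1 2*m 0*m 1*m 2*n 0*n 2*n 2 + 2*T 1 2*m 0*m 1*m 2*n 0*n 1*n 1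 + (-2)*T 1 2*m 0*m 1*m 2*n 0*n 0*n 0 + 2*T 1 2*m 0*m 1*m 1*n 0*n 1*n 2 + (-2)*T 1 2*m 0*m 0*m 2*n 1*n 2*n 2 + 2*T 1 2*m 0*m 0*m 2*n 0*n 0*n 1 + (-2)*T 1 2*m 0*m 0*m 1*n 1*n 1*n 2 + 2*T 1 2*m 0*m 0*m 1*n 0*n 0*n 2 + (-2)*T 1 2*m 0*m 0*m 0*n 0*n 1*n 2 + (-2)*T 1 2*T 1 2*m 2*m 2*n 0*n 0 + (-2)*T 1 2*T 1 2*m 1*m 1*n 0*n 0 + 4*T 1 2*T 1 2*m 0*m 2*n 0*n 2 + 4*T 1 2*T 1 2*m 0*m 1*n 0*n 1 + (-2)*T 1 2*T 1 2*m 0*m 0*n 2*n 2 + (-2)*T 1 2*T 1 2*m 0*m 0*n 1*n 1 + 1*T 1 1*m 2*m 2*m 2*n 0*n 0*n 2 + 1*T 1 1*m 1*m 2*m 2*n 0*n 0*n 1 + (-2)*T 1 1*m 0*m 2*m 2*n 0*n 2*n 2 + 1*T 1 1*m 0*m 2*m 2*n 0*n 0*n 0 + (-2)*T 1 1*m 0*m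 1*m 2*n 0*n 1*n 2 + 1*T 1 1*m 0*m 0*m 2*n 2*n 2*n 2 + (-2)*T 1 1*m 0*m 0*m 2*n 0*n 0*n 2 + 1*T 1 1*m 0*m 0*m 1*n 1*n 2*n 2 + 1*T 1 1*m 0*m 0*m 0*n 0*n 2*n 2 + 2*T 1 1*T 2 2*m 2*m 2*n 0*n 0 + 2*T 1 1*T 2 2*m 1*m 1*n 0*n 0 + (-4)*T 1 1*T 2 2*m 0*m 2*n 0*n 2 + (-4)*T 1 1*T 2 2*m 0*m 1*n 0*n 1 + 2*T 1 1*T 2 2*m 0*m 0*n 2*n 2 + 2*T 1 1*T 2 2*m 0*m 0*n 1*n 1 + 2*T 0 2*m 1*m 2*m 2*n 0*n 1*n 2 + (-2)*T 0 2*m 1*m 1*m 2*n 0*n 2*n 2 + 2*T 0 2*m 1*m 1*m 2*n 0*n 1*n 1 + (-2)*T 0 2*m 1*m 1*m 1*n 0*n 1*n 2 + (-2)*T 0 2*m 0*m 2*m 2*n 1*n 1*n 2 + 2*T 0 2*m 0*m 1*m 2*n 1*n 2*n 2 + (-2)*T 0 2*m 0*m 1*m 2*n 1*n 1*n 1 +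 2*T 0 2*m 0*m 1*m 2*n 0*n 0*n 1 + 2*T 0 2*m 0*m 1*m 1*n 1*n 1*n 2 + (-2)*T 0 2*m 0*m 1*m 1*n 0*n 0*n 2 + (-2)*T 0 2*m 0*m 0*m 2*n 0*n 1*n 1 + 2*T 0 2*m 0*m 0*m 1*n 0*n 1*n 2 + 4*T 0 2*T 1 2*m 2*m 2*n 0*n 1 + (-4)*T 0 2*T 1 2*m 1*m 2*n 0*n 2 + (-4)*T 0 2*T 1 2*m 0*m 2*n 1*n 2 + 4*T 0 2*T 1 2*m 0*m 1*n 2*n 2 + 4*T 0 2*T 1 1*m 1*m 2*n 0*n 1 + (-4)*T 0 2*T 1 1*m 1*m 1*n 0*n 2 + (-4)*T 0 2*T 1 1*m 0*m 2*n 1*n 1 + 4*T 0 2*T 1 1*m 0*m 1*n 1*n 2 + (-2)*T 0 2*T 0 2*m 2*m 2*n 1*n 1 + 4*T 0 2*T 0 2*m 1*m 2*n 1*n 2 + (-2)*T 0 2*T 0 2*m 1*m 1*n 2*n 2 + (-2)*T 0 2*T 0 2*m 1*m 1*n 0*n 0 + 4*T 0 2*T 0 2*m 0*m 1*n 0*n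 1 + (-2)*T 0 2*T 0 2*m 0*m 0*n 1*n 1 + (-2)*T 0 1*m 2*m 2*m 2*n 0*n 1*n 2 + 2*T 0 1*m 1*m 2*m 2*n 0*n 2*n 2 + (-2)*T 0 1*m 1*m 2*m 2*n 0*n 1*n 1 + 2*T 0 1*m 1*m 1*m 2*n 0*n 1*n 2 + 2*T 0 1*m 0*m 2*m 2*n 1*n 2*n 2 + (-2)*T 0 1*m 0*m 2*m 2*n 0*n 0*n 1 + (-2)*T 0 1*m 0*m 1*m 2*n 2*n 2*n 2 + 2*T 0 1*m 0*m 1*m 2*n 1*n 1*n 2 + 2*T 0 1*m 0*m 1*m 2*n 0*n 0*n 2 + (-2)*T 0 1*m 0*m 1*m 1*n 1*n 2*n 2 + 2*T 0 1*m 0*m 0*m 2*n 0*n 1*n 2 + (-2)*T 0 1*m 0*m 0*m 1*n 0*n 2*n 2 + (-4)*T 0 1*T 2 2*m 2*m 2*n 0*n 1 + 4*T 0 1*T 2 2*m 1*m 2*n 0*n 2 + 4*T 0 1*T 2 2*m 0*m 2*n 1*n 2 + (-4)*T 0 1*T 2 2*m 0*m 1*n 2*n 2 + (-4)*T 0 1*T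 1 2*m 1*m 2*n 0*n 1 + 4*T 0 1*T 1 2*m 1*m 1*n 0*n 2 + 4*T 0 1*T 1 2*m 0*m 2*n 1*n 1 + (-4)*T 0 1*T 1 2*m 0*m 1*n 1*n 2 + 4*T 0 1*T 0 2*m 1*m 2*n 0*n 0 + (-4)*T 0 1*T 0 2*m 0*m 2*n 0*n 1 + (-4)*T 0 1*T 0 2*m 0*m 1*n 0*n 2 + 4*T 0 1*T 0 2*m 0*m 0*n 1*n 2 + (-2)*T 0 1*T 0 1*m 2*m 2*n 1*n 1 + (-2)*T 0 1*T 0 1*m 2*m 2*n 0*n 0 + 4*T 0 1*T 0 1*m 1*m 2*n 1*n 2 + (-2)*T 0 1*T 0 1*m 1*m 1*n 2*n 2 + 4*T 0 1*T 0 1*m 0*m 2*n 0*n 2 + (-2)*T 0 1*T 0 1*m 0*m 0*n 2*n 2 + 1*T 0 0*m 2*m 2*m 2*n 1*n 1*n 2 + (-2)*T 0 0*m 1*m 2*m 2*n 1*n 2*n 2 + 1*T 0 0*m 1*m 2*m 2*n 1*n 1*n 1 + 1*T 0 0*m 1*m 1*m 2*n 2*n 2*n 2 + (-2)*T 0 0*m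 1*m 1*m 2*n 1*n 1*n 2 + 1*T 0 0*m 1*m 1*m 1*n 1*n 2*n 2 + 1*T 0 0*m 0*m 2*m 2*n 0*n 1*n 1 + (-2)*T 0 0*m 0*m 1*m 2*n 0*n 1*n 2 + 1*T 0 0*m 0*m 1*m 1*n 0*n 2*n 2 + 2*T 0 0*T 2 2*m 2*m 2*n 1*n 1 + (-4)*T 0 0*T 2 2*m 1*m 2*n 1*n 2 + 2*T 0 0*T 2 2*m 1*m 1*n 2*n 2 + 2*T 0 0*T 2 2*m 1*m 1*n 0*n 0 + (-4)*T 0 0*T 2 2*m 0*m 1*n 0*n 1 + 2*T 0 0*T 2 2*m 0*m 0*n 1*n 1 + (-4)*T 0 0*T 1 2*m 1*m 2*n 0*n 0 + 4*T 0 0*T 1 2*m 0*m 2*n 0*n 1 + 4*T 0 0*T 1 2*m 0*m 1*n 0*n 2 + (-4)*T 0 0*T 1 2*m 0*m 0*n 1*n 2 + 2*T 0 0*T 1 1*m 2*m 2*n 1*n 1 + 2*T 0 0*T 1 1*m 2*m 2*n 0*n 0 + (-4)*T 0 0*T 1 1*m 1*m 2*n 1*n 2 + 2*T 0 0*T 1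 1*m 1*m 1*n 2*n 2 + (-4)*T 0 0*T 1 1*m 0*m 2*n 0*n 2 + 2*T 0 0*T 1 1*m 0*m 0*n 2*n 2) * h1'
end keydet

lemma my_dot_self_pos {v : Fin 3 → ℝ} (hv : v ≠ 0) : 0 < v ⬝ᵥ v := by
  have h0 : 0 ≤ v ⬝ᵥ v := by
    simp only [dotProduct]
    exact Finset.sum_nonneg fun i _ => mul_self_nonneg _
  rcases h0.lt_or_eq with h | h
  · exact h
  · exact absurd (dotProduct_self_eq_zero.mp h.symm) hv

lemma case_lemma (T : Matrix (Fin 3) (Fin 3) ℝ) (m n : Fin 3 → ℝ) (hTs : Tᵀ = T)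
    (h1 : m ⬝ᵥ n = 0) (h2 : 2 * (m ⬝ᵥ (T *ᵥ n)) + (m ⬝ᵥ m) * (n ⬝ᵥ n) = 0)
    (hm : m ≠ 0) (hn : n ≠ 0)
    (hmu : m ⬝ᵥ (T *ᵥ (m ⨯₃ n)) = 0) :
    ∃ e : Fin 3 → ℝ, e ⬝ᵥ e = 1 ∧
      T + vecMulVec m n + vecMulVec n m = reflMat e * T * reflMat e := by
  have hsd : ∀ x y : Fin 3 → ℝ, x ⬝ᵥ (T *ᵥ y) = (T *ᵥ x) ⬝ᵥ y := by
    intro x y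
    rw [dotProduct_mulVec, ← mulVec_transpose, hTs]
  have hmm : 0 < m ⬝ᵥ m := my_dot_self_pos hm
  have hnn : 0 < n ⬝ᵥ n := my_dot_self_pos hn
  set z : Fin 3 → ℝ := m ⨯₃ n with hz
  set x : Fin 3 → ℝ :=
    (2 * (m ⬝ᵥ m)) • (T *ᵥ m) - (2 * (m ⬝ᵥ (T *ᵥ m))) • m + ((m ⬝ᵥ m) ^ 2) • n with hx
  have hxm : x ⬝ᵥ m = 0 := by
    simp only [hx, add_dotProduct, sub_dotProduct, smul_dotProduct, smul_eq_mul]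
    rw [← hsd m m, dotProduct_comm n m, h1]
    ring
  have hxn : x ⬝ᵥ n = 0 := by
    simp only [hx, add_dotProduct, sub_dotProduct, smul_dotProduct, smul_eq_mul]
    rw [← hsd m n, h1]
    linear_combination (m ⬝ᵥ m) * h2
  have hxz : x ⬝ᵥ z = 0 := by
    simp only [hx, add_dotProduct, sub_dotProduct, smul_dotProduct, smul_eq_mul]
    rw [← hsd m z, hz, my_dot_cross_left, my_dot_cross_right, hmu]
    ring
  have hzz : z ⬝ᵥ z ≠ 0 := by
    rw [hz, my_cross_lagrange, h1]
    nlinarith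
  have hx0 : x = 0 := my_span_vec m n x hxm hxn hxz hzz
  -- decompose T *ᵥ m
  have hmm' : (m ⬝ᵥ m) ≠ 0 := ne_of_gt hmm
  have hTm2 : (2 * (m ⬝ᵥ m)) • (T *ᵥ m)
      = (2 * (m ⬝ᵥ (T *ᵥ m))) • m + (-(m ⬝ᵥ m) ^ 2) • n := by
    funext i
    have hxi := congrFun hx0 i
    simp only [hx, Pi.add_apply, Pi.sub_apply, Pi.smul_apply, smul_eq_mul,
      Pi.zero_apply] at hxi
    simp only [Pi.add_apply, Pi.smul_apply, smul_eq_mul]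
    linear_combination hxi
  have hTm : T *ᵥ m = ((m ⬝ᵥ (T *ᵥ m)) / (m ⬝ᵥ m)) • m + (-(m ⬝ᵥ m) / 2) • n := by
    apply smul_right_injective (Fin 3 → ℝ) (show (2 * (m ⬝ᵥ m)) ≠ 0 by positivity)
    dsimp only
    rw [hTm2, smul_add, smul_smul, smul_smul]
    have gen : ∀ A B : ℝ, A ≠ 0 → 2 * A * (B / A) = 2 * B := by
      intro A B hA; field_simp
    have e1 : 2 * (m ⬝ᵥ m) * ((m ⬝ᵥ (T *ᵥ m)) / (m ⬝ᵥ m)) = 2 * (m ⬝ᵥ (T *ᵥ m)) :=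
      gen _ _ hmm'
    have e2 : 2 * (m ⬝ᵥ m) * (-(m ⬝ᵥ m) / 2) = -(m ⬝ᵥ m) ^ 2 := by ring
    rw [e1, e2]
  -- the unit vector
  set s : ℝ := (Real.sqrt (m ⬝ᵥ m))⁻¹ with hs
  have hsqrt : Real.sqrt (m ⬝ᵥ m) ^ 2 = m ⬝ᵥ m := Real.sq_sqrt hmm.le
  have hsne : Real.sqrt (m ⬝ᵥ m) ≠ 0 := ne_of_gt (Real.sqrt_pos.mpr hmm)
  have hs2 : s ^ 2 * (m ⬝ᵥ m) = 1 := by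
    have key : ∀ t : ℝ, t ≠ 0 → t ^ 2 = m ⬝ᵥ m → (t⁻¹) ^ 2 * (m ⬝ᵥ m) = 1 := by
      intro t ht ht2
      rw [← ht2, inv_pow, inv_mul_cancel₀ (pow_ne_zero _ ht)]
    exact key _ hsne hsqrt
  set e : Fin 3 → ℝ := s • m with he_def
  have he : e ⬝ᵥ e = 1 := by
    rw [he_def, smul_dotProduct, dotProduct_smul, smul_eq_mul, smul_eq_mul, ← mul_assoc,
      ← pow_two, hs2]
  set c : ℝ := (m ⬝ᵥ (T *ᵥ m)) / (m ⬝ᵥ m) with hc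
  set d : Fin 3 → ℝ := (-(s * (m ⬝ᵥ m)) / 2) • n with hd
  have hed : e ⬝ᵥ d = 0 := by
    rw [he_def, hd, smul_dotProduct, dotProduct_smul, smul_eq_mul, smul_eq_mul, h1]
    ring
  have hTe : T *ᵥ e = c • e + d := by
    rw [he_def, mulVec_smul, hTm, hd, hc]
    funext i
    simp only [Pi.add_apply, Pi.smul_apply, smul_eq_mul]
    ring
  have hconj := refl_conj T e d c hTs he hed hTe
  have hrs : (-(s * (m ⬝ᵥ m)) / 2) * s = -(1 / 2) := by
    have : s * (m ⬝ᵥ m) * s = 1 := by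
      rw [mul_comm (s * (m ⬝ᵥ m)) s, ← mul_assoc, ← pow_two, hs2]
    linarith [this]
  have hvde : vecMulVec d e = (-(1 / 2) : ℝ) • vecMulVec n m := by
    rw [hd, he_def, my_vmv_smul_left, my_vmv_smul_right, smul_smul, hrs]
  have hved : vecMulVec e d = (-(1 / 2) : ℝ) • vecMulVec m n := by
    rw [hd, he_def, my_vmv_smul_left, my_vmv_smul_right, smul_smul, mul_comm s, hrs]
  refine ⟨e, he, ?_⟩
  rw [hconj, hvde, hved]
  module

open scoped MatrixOrder in
theorem Matrix.PosSemidef.eq_of_sq_eq_sq {A B : Matrix (Fin 3) (Fin 3) ℝ} (hA : A.PosSemidef)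
    (hB : B.PosSemidef) (h : A ^ 2 = B ^ 2) : A = B :=
  (CFC.sq_eq_sq_iff A B hA.nonneg hB.nonneg).mp h

lemma my_vmv_zero_left (b : Fin 3 → ℝ) : vecMulVec (0 : Fin 3 → ℝ) b = 0 := by
  ext i j; simp [vecMulVec_apply]

lemma my_vmv_zero_right (a : Fin 3 → ℝ) : vecMulVec a (0 : Fin 3 → ℝ) = 0 := by
  ext i j; simp [vecMulVec_apply]

lemma core_forward (T : Matrix (Fin 3) (Fin 3) ℝ) (m n : Fin 3 → ℝ) (hTs : Tᵀ = T)
    (h1 : m ⬝ᵥ n = 0) (h2 : 2 * (m ⬝ᵥ (T *ᵥ n)) + (m ⬝ᵥ m) * (n ⬝ᵥ n) = 0)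
    (hdet : (T + vecMulVec m n + vecMulVec n m).det = T.det)
    (hm : m ≠ 0) (hn : n ≠ 0) :
    ∃ e : Fin 3 → ℝ, e ⬝ᵥ e = 1 ∧
      T + vecMulVec m n + vecMulVec n m = reflMat e * T * reflMat e := by
  have hsd : ∀ x y : Fin 3 → ℝ, x ⬝ᵥ (T *ᵥ y) = (T *ᵥ x) ⬝ᵥ y := by
    intro x y
    rw [dotProduct_mulVec, ← mulVec_transpose, hTs]
  have hk := key_det T m n hTs h1
  rw [hdet, sub_self, mul_zero, h2, zero_mul, add_zero] at hk
  have hprod : (m ⬝ᵥ (T *ᵥ (m ⨯₃ n))) * (n ⬝ᵥ (T *ᵥ (m ⨯₃ n))) = 0 := by linarith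
  rcases mul_eq_zero.mp hprod with hmu | hnu
  · exact case_lemma T m n hTs h1 h2 hm hn hmu
  · have h1' : n ⬝ᵥ m = 0 := by rwa [dotProduct_comm]
    have h2' : 2 * (n ⬝ᵥ (T *ᵥ m)) + (n ⬝ᵥ n) * (m ⬝ᵥ m) = 0 := by
      rw [hsd n m, dotProduct_comm (T *ᵥ n) m, mul_comm (n ⬝ᵥ n)]
      exact h2
    have hmu' : n ⬝ᵥ (T *ᵥ (n ⨯₃ m)) = 0 := by
      rw [← cross_anticomm m n, mulVec_neg, dotProduct_neg, hnu, neg_zero]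
    obtain ⟨e, he, heq⟩ := case_lemma T n m hTs h1' h2' hn hm hmu'
    refine ⟨e, he, ?_⟩
    rw [add_right_comm]
    exact heq

theorem stmt_14 (A B : Matrix (Fin 3) (Fin 3) ℝ) (hA : A.PosDef) (hB : B.PosDef)
    (R : Matrix (Fin 3) (Fin 3) ℝ) (hR : R * Rᵀ = 1) (hBA : B = R * A * Rᵀ) :
    (∃ (Q : Matrix (Fin 3) (Fin 3) ℝ) (a n : Fin 3 → ℝ),
        SO3 Q ∧ Q * B - A = Matrix.vecMulVec a n)
    ↔ (∃ e : Fin 3 → ℝ, e ⬝ᵥ e = 1 ∧ B = reflMat e * A * reflMat e) := by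
  have hAs : Aᵀ = A := by
    have := hA.isHermitian.eq; rwa [conjTranspose_eq_transpose_of_trivial] at this
  have hBs : Bᵀ = B := by
    have := hB.isHermitian.eq; rwa [conjTranspose_eq_transpose_of_trivial] at this
  constructor
  · rintro ⟨Q, a, n, ⟨hQo, hQdet⟩, hk⟩
    have hQtQ : Qᵀ * Q = 1 := mul_eq_one_comm.mp hQo
    have hRtR : Rᵀ * R = 1 := mul_eq_one_comm.mp hR
    have hQB : Q * B = vecMulVec a n + A := sub_eq_iff_eq_add.mp hk
    have hTs : (A * A)ᵀ = A * A := by rw [transpose_mul, hAs]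
    have hsd : ∀ x y : Fin 3 → ℝ, x ⬝ᵥ ((A * A) *ᵥ y) = ((A * A) *ᵥ x) ⬝ᵥ y := by
      intro x y
      rw [dotProduct_mulVec, ← mulVec_transpose, hTs]
    -- the rank-two perturbation
    set m : Fin 3 → ℝ := A *ᵥ a + ((a ⬝ᵥ a) / 2) • n with hm_def
    have hBB : B * B = A * A + vecMulVec m n + vecMulVec n m := by
      have hstep : B * B = (Q * B)ᵀ * (Q * B) := by
        rw [transpose_mul, mul_assoc, ← mul_assoc Qᵀ, hQtQ, one_mul, hBs]
      rw [hstep, hQB, transpose_add, my_transpose_vmv, hAs, add_mul, mul_add, mul_add,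
        my_vmv_mul_vmv, my_vmv_mul, my_mul_vmv, hAs, hm_def, my_vmv_add_left,
        my_vmv_add_right, my_vmv_smul_left, my_vmv_smul_right]
      module
    have hB2R : B * B = R * (A * A) * Rᵀ := by
      have assoc1 : R * A * Rᵀ * (R * A * Rᵀ) = R * A * (Rᵀ * R) * (A * Rᵀ) := by
        simp only [mul_assoc]
      rw [hBA, assoc1, hRtR, mul_one]
      simp only [mul_assoc]
    -- trace condition
    have htr : trace (B * B) = trace (A * A) := by
      calc trace (B * B) = trace (R * ((A * A) * Rᵀ)) := by rw [hB2R, mul_assoc]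
        _ = trace ((A * A) * Rᵀ * R) := by rw [trace_mul_comm]
        _ = trace (A * A) := by rw [mul_assoc, hRtR, mul_one]
    have h1 : m ⬝ᵥ n = 0 := by
      have h := htr
      rw [hBB, trace_add, trace_add, my_trace_vmv, my_trace_vmv, dotProduct_comm n m] at h
      linarith
    -- second trace condition
    have htr2 : trace ((B * B) * (B * B)) = trace ((A * A) * (A * A)) := by
      have assoc2 : R * (A * A) * Rᵀ * (R * (A * A) * Rᵀ)
          = R * (A * A) * (Rᵀ * R) * ((A * A) * Rᵀ) := by simp only [mul_assoc]
      rw [hB2R, assoc2, hRtR, mul_one]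
      calc trace (R * (A * A) * ((A * A) * Rᵀ))
          = trace (R * ((A * A) * ((A * A) * Rᵀ))) := by simp only [mul_assoc]
        _ = trace ((A * A) * ((A * A) * Rᵀ) * R) := by rw [trace_mul_comm]
        _ = trace ((A * A) * (A * A)) := by simp only [mul_assoc]; rw [hRtR, mul_one]
    have h2 : 2 * (m ⬝ᵥ ((A * A) *ᵥ n)) + (m ⬝ᵥ m) * (n ⬝ᵥ n) = 0 := by
      have h := htr2
      rw [hBB] at h
      rw [add_mul, add_mul, mul_add, mul_add, mul_add, mul_add, mul_add, mul_add,
        my_vmv_mul_vmv, my_vmv_mul_vmv, my_vmv_mul_vmv, my_vmv_mul_vmv,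
        my_vmv_mul, my_vmv_mul, my_mul_vmv, my_mul_vmv, hTs] at h
      simp only [trace_add, trace_smul, my_trace_vmv, smul_eq_mul] at h
      have e1 : (A * A) *ᵥ m ⬝ᵥ n = m ⬝ᵥ ((A * A) *ᵥ n) := (hsd m n).symm
      have e2 : (A * A) *ᵥ n ⬝ᵥ m = m ⬝ᵥ ((A * A) *ᵥ n) := dotProduct_comm _ _
      have e4 : n ⬝ᵥ ((A * A) *ᵥ m) = m ⬝ᵥ ((A * A) *ᵥ n) := by
        rw [hsd n m]; exact dotProduct_comm _ _
      rw [e1, e2, e4, dotProduct_comm n m] at h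
      linear_combination h / 2 - (m ⬝ᵥ n) * h1
    -- determinant condition
    have hdetR : R.det * R.det = 1 := by
      have := congrArg det hR
      rwa [det_mul, det_transpose, det_one] at this
    have hdet : (A * A + vecMulVec m n + vecMulVec n m).det = (A * A).det := by
      rw [← hBB, hB2R, det_mul, det_mul, det_transpose]
      linear_combination (A * A).det * hdetR
    -- case split on degeneracy
    by_cases h00 : m = 0 ∨ n = 0
    · -- degenerate case : B = A
      have hD0 : vecMulVec m n + vecMulVec n m = 0 := by
        rcases h00 with h | h <;>
          rw [h, my_vmv_zero_left, my_vmv_zero_right, add_zero]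
      have hBBAA : B * B = A * A := by rw [hBB, add_assoc, hD0, add_zero]
      have hBeqA : B = A :=
        hB.posSemidef.eq_of_sq_eq_sq hA.posSemidef (by rw [pow_two, pow_two, hBBAA])
      -- take a unit eigenvector of A
      have hH : A.IsHermitian := hA.isHermitian
      set e : Fin 3 → ℝ := ⇑(hH.eigenvectorBasis 0) with he_def
      have he : e ⬝ᵥ e = 1 := by
        have hnorm : ‖hH.eigenvectorBasis 0‖ = 1 := hH.eigenvectorBasis.orthonormal.1 0
        have hinner := real_inner_self_eq_norm_sq (hH.eigenvectorBasis 0)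
        rw [hnorm] at hinner
        rw [one_pow] at hinner
        rw [he_def, ← hinner]
        rw [PiLp.inner_apply]
        simp only [dotProduct, RCLike.inner_apply, conj_trivial]
      have heig : A *ᵥ e = hH.eigenvalues 0 • e + 0 := by
        rw [add_zero, he_def]
        exact hH.mulVec_eigenvectorBasis 0
      have hconj := refl_conj A e 0 (hH.eigenvalues 0) hAs he (dotProduct_zero e) heig
      rw [my_vmv_zero_left, my_vmv_zero_right, add_zero, smul_zero, sub_zero] at hconj
      exact ⟨e, he, by rw [hBeqA, hconj]⟩
    · push_neg at h00
      obtain ⟨e, he, heq⟩ := core_forward (A * A) m n hTs h1 h2 hdet h00.1 h00.2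
      refine ⟨e, he, ?_⟩
      -- B² = (P A P)², both posdef ⇒ equal
      have hPs : (reflMat e)ᴴ = reflMat e := by
        rw [conjTranspose_eq_transpose_of_trivial, reflMat_symm]
      have hPAP : (reflMat e * A * reflMat e).PosSemidef := by
        have := hA.posSemidef.mul_mul_conjTranspose_same (reflMat e)
        rwa [hPs] at this
      have hsq : (reflMat e * A * reflMat e) * (reflMat e * A * reflMat e)
          = reflMat e * (A * A) * reflMat e := by
        have assoc1 : reflMat e * A * reflMat e * (reflMat e * A * reflMat e)
            = reflMat e * A * (reflMat e * reflMat e) * (A * reflMat e) := by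
          simp only [mul_assoc]
        rw [assoc1, reflMat_sq e he, mul_one]
        simp only [mul_assoc]
      exact hB.posSemidef.eq_of_sq_eq_sq hPAP
        (by rw [pow_two, pow_two, hsq, ← heq, hBB, add_assoc])
  · rintro ⟨e, he, hBe⟩
    obtain ⟨Q, a, n, hQ, hr⟩ := backward_dir A hA e he
    exact ⟨Q, a, n, hQ, by rw [hBe]; exact hr⟩
end

section
/- Let A and B be 3×3 real positive-definite symmetric matrices such that B = R A Rᵀ for some 3×3 real orthogonal matrix R. Suppose A⁻¹ B² A⁻¹ = μ₁ e₁⊗e₁ + e₂⊗e₂ + μ₃ e₃⊗e₃, where e₁, e₂, e₃ ∈ ℝ³ are orthonormal and 0 < μ₁ < 1 < μ₃. Then the following three identities hold: μ₁ μ₃ = 1; e₁ · A² e₁ = μ₃ (e₃ · A² e₃); and (e₂ · A² e₁)² = μ₃ (e₂ · A² e₃)². -/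
open Matrix

private lemma myTrConj {n : ℕ} (X M Y : Matrix (Fin n) (Fin n) ℝ) (h : Y * X = 1) :
    (X * M * Y).trace = M.trace := by
  rw [Matrix.trace_mul_cycle, h, Matrix.one_mul]

private lemma myConjMul {n : ℕ} (X M N Y : Matrix (Fin n) (Fin n) ℝ) (h : Y * X = 1) :
    X * M * Y * (X * N * Y) = X * (M * N) * Y := by
  have h2 : Y * (X * (N * Y)) = N * Y := by rw [← Matrix.mul_assoc, h, Matrix.one_mul]
  simp only [Matrix.mul_assoc, h2]

set_option maxHeartbeats 1600000 in
theorem stmt_15 (A B : Matrix (Fin 3) (Fin 3) ℝ) (hA : A.PosDef) (hB : B.PosDef)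
    (R : Matrix (Fin 3) (Fin 3) ℝ) (hR : R * Rᵀ = 1) (hBA : B = R * A * Rᵀ)
    (μ1 μ3 : ℝ) (e1 e2 e3 : Fin 3 → ℝ)
    (he1 : e1 ⬝ᵥ e1 = 1) (he2 : e2 ⬝ᵥ e2 = 1) (he3 : e3 ⬝ᵥ e3 = 1)
    (h12 : e1 ⬝ᵥ e2 = 0) (h13 : e1 ⬝ᵥ e3 = 0) (h23 : e2 ⬝ᵥ e3 = 0)
    (hμ1 : 0 < μ1) (hμ1' : μ1 < 1) (hμ3 : 1 < μ3)
    (hdecomp : A⁻¹ * (B * B) * A⁻¹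
      = μ1 • Matrix.vecMulVec e1 e1 + Matrix.vecMulVec e2 e2
        + μ3 • Matrix.vecMulVec e3 e3) :
    μ1 * μ3 = 1 ∧
    e1 ⬝ᵥ (A * A).mulVec e1 = μ3 * (e3 ⬝ᵥ (A * A).mulVec e3) ∧
    (e2 ⬝ᵥ (A * A).mulVec e1) ^ 2 = μ3 * (e2 ⬝ᵥ (A * A).mulVec e3) ^ 2 := by
  have hdetA : A.det ≠ 0 := ne_of_gt hA.det_pos
  have hAi : A⁻¹ * A = 1 := Matrix.nonsing_inv_mul A (isUnit_iff_ne_zero.mpr hdetA)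
  have hiA : A * A⁻¹ = 1 := Matrix.mul_nonsing_inv A (isUnit_iff_ne_zero.mpr hdetA)
  have hRtR : Rᵀ * R = 1 := mul_eq_one_comm.mp hR
  set P : Matrix (Fin 3) (Fin 3) ℝ := A * A with hP
  have hB2 : B * B = R * P * Rᵀ := by
    rw [hBA, show R * A * Rᵀ * (R * A * Rᵀ) = R * A * ((Rᵀ * R) * (A * Rᵀ)) by
      simp only [Matrix.mul_assoc], hRtR, Matrix.one_mul, hP]
    simp only [Matrix.mul_assoc]
  set E : Matrix (Fin 3) (Fin 3) ℝ := Matrix.of ![e1,e2,e3] with hE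
  set D : Matrix (Fin 3) (Fin 3) ℝ := Matrix.diagonal ![μ1,1,μ3] with hD
  have hEEt : E * Eᵀ = 1 := by
    simp only [dotProduct, Fin.sum_univ_three] at he1 he2 he3 h12 h13 h23
    ext i j
    fin_cases i <;> fin_cases j <;>
      simp [hE, Matrix.mul_apply, Matrix.transpose_apply, Matrix.one_apply,
        Matrix.vecHead, Matrix.vecTail, Fin.sum_univ_three] <;> linarith
  have hEtE : Eᵀ * E = 1 := mul_eq_one_comm.mp hEEt
  have hC : A⁻¹ * (B * B) * A⁻¹ = Eᵀ * D * E := by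
    rw [hdecomp]
    ext i j
    simp [hE, hD, Matrix.mul_apply, Matrix.transpose_apply, Matrix.diagonal,
      Matrix.vecMulVec_apply, Fin.sum_univ_three, Matrix.vecHead, Matrix.vecTail]
    ring
  -- Part 1 : determinants
  have hdetB : B.det = A.det := by
    have h1 : R.det * Rᵀ.det = 1 := by rw [← Matrix.det_mul, hR, Matrix.det_one]
    rw [hBA, Matrix.det_mul, Matrix.det_mul]
    linear_combination A.det * h1
  have hdetE : E.det * E.det = 1 := by
    have h1 := congrArg Matrix.det hEEt
    rw [Matrix.det_mul, Matrix.det_transpose, Matrix.det_one] at h1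
    exact h1
  have hdetD : D.det = μ1 * μ3 := by
    simp [hD, Matrix.det_diagonal, Fin.prod_univ_three]
  have hμμ : μ1 * μ3 = 1 := by
    have h0 := congrArg Matrix.det hC
    simp only [Matrix.det_mul, Matrix.det_transpose, Matrix.det_nonsing_inv,
      Ring.inverse_eq_inv', hdetB, hdetD] at h0
    have h2 : (A.det)⁻¹ * (A.det * A.det) * (A.det)⁻¹ = 1 := by field_simp
    rw [h2] at h0
    nlinarith [hdetE, h0]
  -- conjugation identities
  set Q : Matrix (Fin 3) (Fin 3) ℝ := E * P * Eᵀ with hQdef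
  have hQ : ∀ i j, Q i j = (![e1,e2,e3] i) ⬝ᵥ P.mulVec (![e1,e2,e3] j) := by
    intro i j
    fin_cases i <;> fin_cases j <;>
    · simp [hQdef, hE, hP, Matrix.mul_apply, Matrix.transpose_apply, Matrix.mulVec,
        Matrix.vecMul, dotProduct, Matrix.vecHead, Matrix.vecTail, Fin.sum_univ_three]
      try ring
  have hPsym : Pᵀ = P := by
    have h := hA.isHermitian
    rw [Matrix.IsHermitian, conjTranspose_eq_transpose_of_trivial] at h
    rw [hP, Matrix.transpose_mul, h]
  have hQsymM : Qᵀ = Q := by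
    rw [hQdef, Matrix.transpose_mul, Matrix.transpose_mul, Matrix.transpose_transpose,
      hPsym, Matrix.mul_assoc]
    rw [hP]
    simp only [Matrix.mul_assoc]
  have hsym : ∀ i j, Q j i = Q i j := by
    intro i j
    have := congrFun (congrFun hQsymM i) j
    rwa [Matrix.transpose_apply] at this
  set Cm : Matrix (Fin 3) (Fin 3) ℝ := A⁻¹ * (B * B) * A⁻¹ with hCm
  have hDC : D = E * Cm * Eᵀ := by
    rw [hC, show E * (Eᵀ * D * E) * Eᵀ = (E * Eᵀ) * D * (E * Eᵀ) by
      simp only [Matrix.mul_assoc], hEEt, Matrix.one_mul, Matrix.mul_one]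
  -- trace identity 1
  have hCmP : Cm * P = A⁻¹ * (B * B) * A := by
    rw [hCm, hP]
    simp only [Matrix.mul_assoc]
    rw [show A⁻¹ * (A * A) = A by rw [← Matrix.mul_assoc, hAi, Matrix.one_mul]]
  have hDQ : D * Q = E * (Cm * P) * Eᵀ := by
    rw [hDC, hQdef, myConjMul E Cm P Eᵀ hEtE]
  have htrBB : (B * B).trace = P.trace := by
    rw [hB2]; exact myTrConj R P Rᵀ hRtR
  have ht1 : (D * Q).trace = Q.trace := by
    rw [hDQ, myTrConj E (Cm * P) Eᵀ hEtE, hQdef, myTrConj E P Eᵀ hEtE, hCmP,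
      myTrConj A⁻¹ (B * B) A hiA, htrBB]
  -- trace identity 2
  have ht2 : (D * Q * (D * Q)).trace = (Q * Q).trace := by
    rw [hDQ, myConjMul E (Cm * P) (Cm * P) Eᵀ hEtE, myTrConj E _ Eᵀ hEtE,
      hQdef, myConjMul E P P Eᵀ hEtE, myTrConj E _ Eᵀ hEtE,
      hCmP, myConjMul A⁻¹ (B * B) (B * B) A hiA, myTrConj A⁻¹ _ A hiA,
      hB2, myConjMul R P P Rᵀ hRtR, myTrConj R _ Rᵀ hRtR]
  -- expand traces into scalar identities
  simp only [Matrix.trace, Matrix.diag, Matrix.mul_apply, Fin.sum_univ_three, hD,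
    Matrix.diagonal, Matrix.of_apply, Matrix.cons_val', Matrix.cons_val_zero,
    Matrix.cons_val_one, Matrix.head_cons, Matrix.cons_val_two, Matrix.tail_cons,
    Matrix.empty_val', Matrix.cons_val_fin_one, Matrix.vecHead, Matrix.vecTail,
    Function.comp] at ht1 ht2
  norm_num [show (0:Fin 3) ≠ 1 by decide, show (0:Fin 3) ≠ 2 by decide,
    show (1:Fin 3) ≠ 0 by decide, show (1:Fin 3) ≠ 2 by decide,
    show (2:Fin 3) ≠ 0 by decide, show (2:Fin 3) ≠ 1 by decide] at ht1 ht2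
  rw [hsym 0 1, hsym 0 2, hsym 1 2] at ht2
  have g11 : Q 0 0 = e1 ⬝ᵥ P *ᵥ e1 := by simpa using hQ 0 0
  have g33 : Q 2 2 = e3 ⬝ᵥ P *ᵥ e3 := by simpa using hQ 2 2
  have g21 : Q 0 1 = e2 ⬝ᵥ P *ᵥ e1 := by rw [← hsym 0 1]; simpa using hQ 1 0
  have g23 : Q 1 2 = e2 ⬝ᵥ P *ᵥ e3 := by simpa using hQ 1 2
  clear_value Q
  have hμ3ne : μ3 - 1 ≠ 0 := sub_ne_zero.mpr (ne_of_gt hμ3)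
  have ha : Q 0 0 = μ3 * Q 2 2 := by
    have key1 : (μ3 - 1) * (μ3 * Q 2 2 - Q 0 0) = 0 := by
      linear_combination μ3 * ht1 - Q 0 0 * hμμ
    rcases mul_eq_zero.mp key1 with h | h
    · exact absurd h hμ3ne
    · linarith
  have hb : Q 0 1 ^ 2 = μ3 * Q 1 2 ^ 2 := by
    have key2 : (2 * μ3 * (μ3 - 1)) * (μ3 * Q 1 2 ^ 2 - Q 0 1 ^ 2) = 0 := by
      linear_combination μ3 ^ 2 * ht2
        - ((μ1 * μ3 + 1) * Q 0 0 ^ 2 + 2 * μ3 * Q 0 1 ^ 2 + 2 * μ3 ^ 2 * Q 0 2 ^ 2) * hμμ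
        - ((1 - μ3 ^ 2) * (Q 0 0 + μ3 * Q 2 2)) * ha
    have h2 : (2 * μ3 * (μ3 - 1)) ≠ 0 :=
      mul_ne_zero (mul_ne_zero two_ne_zero (by linarith : (0:ℝ) < μ3).ne') hμ3ne
    rcases mul_eq_zero.mp key2 with h | h
    · exact absurd h h2
    · linarith
  refine ⟨hμμ, ?_, ?_⟩
  · rw [← g11, ← g33]; exact ha
  · rw [← g21, ← g23]; exact hb
end

section
/- Let A and B be 3×3 real positive-definite symmetric matrices such that B = R A Rᵀ for some 3×3 real orthogonal matrix R, and suppose A⁻¹ B² A⁻¹ = μ₁ e₁⊗e₁ + e₂⊗e₂ + μ₃ e₃⊗e₃, where e₁, e₂, e₃ ∈ ℝ³ are orthonormal and 0 < μ₁ < 1 < μ₃. Let s ∈ {+1, −1} satisfy s √μ₃ (e₂ · A² e₃) = −(e₂ · A² e₁). Then e₁ · A² e₁ + s √μ₃ (e₃ · A² e₁) > 0, and, setting δ₁ = (2 (e₁ · A² e₁ + s √μ₃ (e₃ · A² e₁)))^(−1/2) and δ₃ = s √μ₃ δ₁, the vector ê = δ₁ A e₁ + δ₃ A e₃ is a unit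 vector satisfying B = (−I + 2 ê⊗ê) A (−I + 2 ê⊗ê). -/
open Matrix
set_option linter.unusedSectionVars false
set_option maxHeartbeats 1000000

section aux
variable {n : Type*} [Fintype n] [DecidableEq n]

lemma myMul_vecMulVec (M : Matrix n n ℝ) (a b : n → ℝ) :
    M * vecMulVec a b = vecMulVec (M *ᵥ a) b := by
  ext i j
  simp [Matrix.mul_apply, vecMulVec_apply, mulVec, dotProduct, Finset.sum_mul, mul_assoc]

lemma myVecMulVec_mul (M : Matrix n n ℝ) (a b : n → ℝ) :
    vecMulVec a b * M = vecMulVec a (Mᵀ *ᵥ b) := by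
  ext i j
  simp [Matrix.mul_apply, vecMulVec_apply, mulVec, dotProduct, Finset.mul_sum,
    transpose_apply, mul_comm, mul_left_comm]

lemma myVecMulVec_mul_vecMulVec (a b c d : n → ℝ) :
    vecMulVec a b * vecMulVec c d = (b ⬝ᵥ c) • vecMulVec a d := by
  ext i j
  simp [Matrix.mul_apply, vecMulVec_apply, dotProduct, Finset.sum_mul, Finset.mul_sum]
  exact Finset.sum_congr rfl fun k _ => by ring

lemma myTranspose_vecMulVec (a b : n → ℝ) : (vecMulVec a b)ᵀ = vecMulVec b a := by
  ext i j; simp [vecMulVec_apply, transpose_apply, mul_comm]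

lemma myDot_mulVec_symm {M : Matrix n n ℝ} (hM : Mᵀ = M) (x y : n → ℝ) :
    x ⬝ᵥ M *ᵥ y = y ⬝ᵥ M *ᵥ x := by
  rw [Matrix.dotProduct_mulVec, ← Matrix.mulVec_transpose, hM, dotProduct_comm]

lemma myMulVec_dot (A : Matrix n n ℝ) (hM : Aᵀ = A) (x y : n → ℝ) :
    (A *ᵥ x) ⬝ᵥ (A *ᵥ y) = x ⬝ᵥ (A * A) *ᵥ y := by
  rw [Matrix.dotProduct_mulVec, Matrix.vecMul_mulVec, hM, ← Matrix.dotProduct_mulVec]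

lemma myDot_self_pos {x : n → ℝ} (hx : x ≠ 0) : 0 < x ⬝ᵥ x := by
  have h0 : 0 ≤ x ⬝ᵥ x := Finset.sum_nonneg fun i _ => mul_self_nonneg _
  rcases h0.lt_or_eq with h | h
  · exact h
  · exact absurd (dotProduct_self_eq_zero.mp h.symm) hx

end aux

theorem stmt_16 (A B : Matrix (Fin 3) (Fin 3) ℝ) (hA : A.PosDef) (hB : B.PosDef)
    (R : Matrix (Fin 3) (Fin 3) ℝ) (hR : R * Rᵀ = 1) (hBA : B = R * A * Rᵀ)
    (μ1 μ3 : ℝ) (e1 e2 e3 : Fin 3 → ℝ)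
    (he1 : e1 ⬝ᵥ e1 = 1) (he2 : e2 ⬝ᵥ e2 = 1) (he3 : e3 ⬝ᵥ e3 = 1)
    (h12 : e1 ⬝ᵥ e2 = 0) (h13 : e1 ⬝ᵥ e3 = 0) (h23 : e2 ⬝ᵥ e3 = 0)
    (hμ1 : 0 < μ1) (hμ1' : μ1 < 1) (hμ3 : 1 < μ3)
    (hdecomp : A⁻¹ * (B * B) * A⁻¹
      = μ1 • Matrix.vecMulVec e1 e1 + Matrix.vecMulVec e2 e2
        + μ3 • Matrix.vecMulVec e3 e3)
    (s : ℝ) (hs : s = 1 ∨ s = -1)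
    (hseq : s * Real.sqrt μ3 * (e2 ⬝ᵥ (A * A).mulVec e3)
      = -(e2 ⬝ᵥ (A * A).mulVec e1))
    (δ1 δ3 : ℝ)
    (hδ1 : δ1 = (Real.sqrt (2 * (e1 ⬝ᵥ (A * A).mulVec e1
        + s * Real.sqrt μ3 * (e3 ⬝ᵥ (A * A).mulVec e1))))⁻¹)
    (hδ3 : δ3 = s * Real.sqrt μ3 * δ1)
    (ehat : Fin 3 → ℝ) (hehat : ehat = δ1 • A.mulVec e1 + δ3 • A.mulVec e3) :
    0 < e1 ⬝ᵥ (A * A).mulVec e1 + s * Real.sqrt μ3 * (e3 ⬝ᵥ (A * A).mulVec e1) ∧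
    ehat ⬝ᵥ ehat = 1 ∧
    B = reflMat ehat * A * reflMat ehat := by
  have hAt : Aᵀ = A := by
    rw [← Matrix.conjTranspose_eq_transpose_of_trivial]; exact hA.1
  have hA2t : (A * A)ᵀ = A * A := by rw [Matrix.transpose_mul, hAt]
  have hdetA : IsUnit A.det := hA.det_pos.ne'.isUnit
  have hAAinv : A * A⁻¹ = 1 := Matrix.mul_nonsing_inv A hdetA
  have hAinvA : A⁻¹ * A = 1 := Matrix.nonsing_inv_mul A hdetA
  have hRtR : Rᵀ * R = 1 := mul_eq_one_comm.mp hR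
  -- scalars
  set a11 := e1 ⬝ᵥ (A * A) *ᵥ e1 with ha11
  set a13 := e3 ⬝ᵥ (A * A) *ᵥ e1 with ha13
  set a22 := e2 ⬝ᵥ (A * A) *ᵥ e2 with ha22
  set a33 := e3 ⬝ᵥ (A * A) *ᵥ e3 with ha33
  set t := s * Real.sqrt μ3 with ht
  have hμ3pos : (0:ℝ) < μ3 := lt_trans one_pos hμ3
  have hs2 : s * s = 1 := by rcases hs with h | h <;> rw [h] <;> norm_num
  have hsqrt : Real.sqrt μ3 * Real.sqrt μ3 = μ3 := Real.mul_self_sqrt hμ3pos.le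
  have ht2 : t * t = μ3 := by
    rw [ht]; linear_combination (Real.sqrt μ3 * Real.sqrt μ3) * hs2 + hsqrt
  have ht0 : t ≠ 0 := by
    intro h; rw [h] at ht2; simp at ht2; linarith
  -- the frame
  set E : Matrix (Fin 3) (Fin 3) ℝ := Matrix.of ![e1, e2, e3] with hE
  have hEET : E * Eᵀ = 1 := by
    ext i j
    have : (E * Eᵀ) i j = (![e1, e2, e3] i) ⬝ᵥ (![e1, e2, e3] j) := by
      rw [Matrix.mul_apply, dotProduct]
      exact Finset.sum_congr rfl fun k _ => by rw [Matrix.transpose_apply]; rfl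
    rw [this]
    fin_cases i <;> fin_cases j <;>
      simp [Matrix.one_apply, he1, he2, he3, h12, h13, h23,
        dotProduct_comm e2 e1, dotProduct_comm e3 e1, dotProduct_comm e3 e2]
  have hETE : Eᵀ * E = 1 := mul_eq_one_comm.mp hEET
  set D : Matrix (Fin 3) (Fin 3) ℝ := Matrix.diagonal ![μ1, 1, μ3] with hD
  have hCD : Eᵀ * D * E
      = μ1 • vecMulVec e1 e1 + vecMulVec e2 e2 + μ3 • vecMulVec e3 e3 := by
    ext i j
    simp [hE, hD, Matrix.mul_apply, Matrix.diagonal, vecMulVec_apply,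
      Fin.sum_univ_succ]
    ring
  have hB2 : B * B = A * (Eᵀ * D * E) * A := by
    rw [hCD, ← hdecomp]
    calc B * B = (A * A⁻¹) * (B * B) * (A⁻¹ * A) := by rw [hAAinv, hAinvA, Matrix.one_mul, Matrix.mul_one]
      _ = A * (A⁻¹ * (B * B) * A⁻¹) * A := by simp only [Matrix.mul_assoc]
  -- determinant: μ1 μ3 = 1
  have hdetB : B.det = A.det := by
    have h1 : R.det * R.det = 1 := by
      have := congrArg Matrix.det hR
      simpa [Matrix.det_mul, Matrix.det_transpose] using this
    rw [hBA, Matrix.det_mul, Matrix.det_mul, Matrix.det_transpose]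
    linear_combination A.det * h1
  have hμμ : μ1 * μ3 = 1 := by
    have h := congrArg Matrix.det hB2
    have hdE : E.det * E.det = 1 := by
      have := congrArg Matrix.det hEET
      simpa [Matrix.det_mul, Matrix.det_transpose] using this
    have hdD : D.det = μ1 * μ3 := by
      simp [hD, Matrix.det_diagonal, Fin.prod_univ_succ]
    simp only [Matrix.det_mul, Matrix.det_transpose, hdD] at h
    rw [hdetB] at h
    have hAne : A.det ≠ 0 := hdetA.ne_zero
    have h3 : A.det * A.det * (μ1 * μ3) = A.det * A.det * 1 := by
      linear_combination -h - (A.det * A.det * (μ1 * μ3)) * hdE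
    exact mul_left_cancel₀ (mul_ne_zero hAne hAne) h3
  -- trace: μ1 a11 + a22 + μ3 a33 = a11 + a22 + a33
  have hGentry : ∀ i j, (E * (A * A) * Eᵀ) i j
      = (![e1, e2, e3] i) ⬝ᵥ (A * A) *ᵥ (![e1, e2, e3] j) := by
    intro i j
    rw [Matrix.mul_assoc]
    rfl
  have htrBB : Matrix.trace (B * B) = Matrix.trace (A * A) := by
    have hBB : B * B = R * ((A * A) * Rᵀ) := by
      rw [hBA]
      calc R * A * Rᵀ * (R * A * Rᵀ) = R * (A * ((Rᵀ * R) * (A * Rᵀ))) := by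
            simp only [Matrix.mul_assoc]
        _ = R * ((A * A) * Rᵀ) := by rw [hRtR, Matrix.one_mul]; simp only [Matrix.mul_assoc]
    rw [hBB, Matrix.trace_mul_comm, Matrix.mul_assoc, Matrix.trace_mul_comm,
      ← Matrix.mul_assoc, hRtR, Matrix.one_mul]
  have htrE : Matrix.trace (E * (A * A) * Eᵀ) = Matrix.trace (A * A) := by
    rw [Matrix.trace_mul_cycle, hETE, Matrix.one_mul]
  have htrD : Matrix.trace (B * B) = Matrix.trace ((E * (A * A) * Eᵀ) * D) := by
    rw [hB2, Matrix.trace_mul_cycle, ← Matrix.mul_assoc, Matrix.trace_mul_cycle,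
      ← Matrix.mul_assoc]
  have htr : μ1 * a11 + a22 + μ3 * a33 = a11 + a22 + a33 := by
    have h := htrD.symm.trans (htrBB.trans htrE.symm)
    rw [Matrix.trace, Matrix.trace] at h
    simp only [Matrix.diag, Fin.sum_univ_three, hD, Matrix.mul_diagonal] at h
    rw [hGentry 0 0, hGentry 1 1, hGentry 2 2] at h
    simp only [Matrix.cons_val_zero, Matrix.cons_val_one, Matrix.head_cons,
      Matrix.cons_val_two, Matrix.tail_cons, mul_one] at h
    rw [← ha11, ← ha22, ← ha33] at h
    linarith
  have hkey : a11 = μ3 * a33 := by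
    have hne : μ3 - 1 ≠ 0 := by linarith
    have h0 : (μ3 - 1) * (a11 - μ3 * a33) = 0 := by
      linear_combination (-μ3) * htr + a11 * hμμ
    rcases mul_eq_zero.mp h0 with h | h
    · exact absurd h hne
    · linarith
  -- positivity
  have hsymm13 : e1 ⬝ᵥ (A * A) *ᵥ e3 = a13 := by
    rw [ha13]; exact myDot_mulVec_symm hA2t e1 e3
  have hvAv : 0 < (e1 + t • e3) ⬝ᵥ (A * A) *ᵥ (e1 + t • e3) := by
    have hvne : e1 + t • e3 ≠ 0 := by
      intro hv0
      have h0 : (e1 + t • e3) ⬝ᵥ e1 = 0 := by rw [hv0]; simp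
      rw [add_dotProduct, smul_dotProduct, he1, dotProduct_comm e3 e1, h13] at h0
      simp at h0
    have hAvne : A *ᵥ (e1 + t • e3) ≠ 0 := by
      intro h0
      have hinj := Matrix.mulVec_injective_iff_isUnit.mpr (isUnit_iff_isUnit_det A |>.mpr hdetA)
      have : A *ᵥ (e1 + t • e3) = A *ᵥ 0 := by rw [h0, Matrix.mulVec_zero]
      exact hvne (hinj this)
    have := myDot_self_pos hAvne
    rwa [myMulVec_dot A hAt] at this
  have f11 : e1 ⬝ᵥ (A * A) *ᵥ e1 = a11 := ha11.symm
  have f13 : e1 ⬝ᵥ (A * A) *ᵥ e3 = a13 := hsymm13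
  have f31 : e3 ⬝ᵥ (A * A) *ᵥ e1 = a13 := ha13.symm
  have f33 : e3 ⬝ᵥ (A * A) *ᵥ e3 = a33 := ha33.symm
  have hexp : (e1 + t • e3) ⬝ᵥ (A * A) *ᵥ (e1 + t • e3)
      = a11 + 2 * t * a13 + (t * t) * a33 := by
    simp only [Matrix.mulVec_add, Matrix.mulVec_smul, dotProduct_add, add_dotProduct,
      dotProduct_smul, smul_dotProduct, smul_eq_mul, f11, f13, f31, f33]
    ring
  have hposgoal : 0 < a11 + t * a13 := by
    rw [hexp, ht2] at hvAv
    nlinarith [hvAv, hkey]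
  -- δ1 facts
  have hδarg : (0:ℝ) < 2 * (a11 + t * a13) := by linarith
  have hδ1pos : 0 < δ1 := by
    rw [hδ1]
    exact inv_pos.mpr (Real.sqrt_pos.mpr hδarg)
  have hδ1ne : δ1 ≠ 0 := hδ1pos.ne'
  have hδ1sq : δ1 * δ1 * (2 * (a11 + t * a13)) = 1 := by
    rw [hδ1]
    have hr : Real.sqrt (2 * (a11 + t * a13)) * Real.sqrt (2 * (a11 + t * a13))
        = 2 * (a11 + t * a13) := Real.mul_self_sqrt hδarg.le
    have hrne : Real.sqrt (2 * (a11 + t * a13)) ≠ 0 := (Real.sqrt_pos.mpr hδarg).ne'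
    rw [← hr]
    field_simp
    rw [Real.sqrt_sq (Real.sqrt_nonneg _)]
  -- unit vector
  have hunit : ehat ⬝ᵥ ehat = 1 := by
    rw [hehat, hδ3]
    simp only [dotProduct_add, add_dotProduct, dotProduct_smul, smul_dotProduct,
      smul_eq_mul, myMulVec_dot A hAt, f11, f13, f31, f33]
    linear_combination hδ1sq + (δ1 * δ1 * a33) * ht2 - (δ1 * δ1) * hkey
  -- the reflection Q
  set Q := reflMat ehat with hQ
  have hPP : vecMulVec ehat ehat * vecMulVec ehat ehat = vecMulVec ehat ehat := by
    rw [myVecMulVec_mul_vecMulVec, hunit, one_smul]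
  have hQt : Qᵀ = Q := by
    rw [hQ, reflMat, Matrix.transpose_add, Matrix.transpose_neg, Matrix.transpose_one,
      Matrix.transpose_smul, myTranspose_vecMulVec]
  have hQQ : Q * Q = 1 := by
    rw [hQ, reflMat]
    simp only [Matrix.add_mul, Matrix.mul_add, Matrix.neg_mul, Matrix.mul_neg,
      Matrix.one_mul, Matrix.mul_one, neg_neg, Matrix.smul_mul, Matrix.mul_smul,
      smul_smul, hPP]
    module
  -- vectors d and w
  set d : Fin 3 → ℝ := δ1 • e1 + δ3 • e3 with hd
  set w : Fin 3 → ℝ := δ1 • ((A * A) *ᵥ e1) + δ3 • ((A * A) *ᵥ e3) with hw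
  have hAd : A *ᵥ d = ehat := by
    rw [hd, hehat, Matrix.mulVec_add, Matrix.mulVec_smul, Matrix.mulVec_smul]
  have hAinve : A⁻¹ *ᵥ ehat = d := by
    rw [← hAd, Matrix.mulVec_mulVec, hAinvA, Matrix.one_mulVec]
  have hAe : A *ᵥ ehat = w := by
    rw [hehat, hw]
    simp only [Matrix.mulVec_add, Matrix.mulVec_smul, Matrix.mulVec_mulVec]
  -- coordinates of w
  set w1 : ℝ := δ1 * a11 + δ3 * a13 with hw1
  set w3 : ℝ := δ1 * a13 + δ3 * a33 with hw3
  have he1w : e1 ⬝ᵥ w = w1 := by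
    rw [hw]
    simp only [dotProduct_add, dotProduct_smul, smul_eq_mul, f11, f13]
    rw [hw1]
  have he2w : e2 ⬝ᵥ w = 0 := by
    rw [hw]
    simp only [dotProduct_add, dotProduct_smul, smul_eq_mul]
    rw [hδ3]
    linear_combination δ1 * hseq
  have he3w : e3 ⬝ᵥ w = w3 := by
    rw [hw]
    simp only [dotProduct_add, dotProduct_smul, smul_eq_mul, f31, f33]
    rw [hw3]
  have hbasis : ∀ x : Fin 3 → ℝ, x = (e1 ⬝ᵥ x) • e1 + (e2 ⬝ᵥ x) • e2 + (e3 ⬝ᵥ x) • e3 := by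
    intro x
    have h1 : Eᵀ *ᵥ (E *ᵥ x) = x := by
      rw [Matrix.mulVec_mulVec, hETE, Matrix.one_mulVec]
    have h2 : Eᵀ *ᵥ (E *ᵥ x) = (e1 ⬝ᵥ x) • e1 + (e2 ⬝ᵥ x) • e2 + (e3 ⬝ᵥ x) • e3 := by
      funext j
      simp [hE, Matrix.mulVec, dotProduct, Matrix.transpose_apply, Fin.sum_univ_three]
      ring
    exact h1.symm.trans h2
  have hwv : w = w1 • e1 + w3 • e3 := by
    have h := hbasis w
    rw [he1w, he2w, he3w, zero_smul, add_zero] at h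
    exact h
  -- scalar facts
  have F1 : 2 * δ1 * w1 = 1 := by
    rw [hw1]; linear_combination hδ1sq + (2 * δ1 * a13) * hδ3
  have F2 : t * w3 = w1 := by
    rw [hw1, hw3]
    linear_combination (t * a33 - a13) * hδ3 + (δ1 * a33) * ht2 - δ1 * hkey
  have h2δ1 : (2:ℝ) * δ1 ≠ 0 := by positivity
  have w1v : w1 = 1 / (2 * δ1) := by
    rw [eq_div_iff h2δ1]; linear_combination F1
  have w3v : w3 = 1 / (2 * (t * δ1)) := by
    rw [eq_div_iff (by simp [ht0, hδ1ne] : (2:ℝ) * (t * δ1) ≠ 0)]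
    linear_combination 2 * δ1 * F2 + F1
  have μ3v : μ3 = t * t := ht2.symm
  have μ1v : μ1 = 1 / (t * t) := by
    rw [eq_div_iff (mul_ne_zero ht0 ht0)]
    linear_combination μ1 * ht2 + hμμ
  -- the numeric matrix N
  set dv : Fin 3 → ℝ := ![δ1, 0, δ3] with hdv
  set wv : Fin 3 → ℝ := ![w1, 0, w3] with hwvv
  set N : Matrix (Fin 3) (Fin 3) ℝ := -1 + (2 : ℝ) • vecMulVec dv wv with hN
  have hEdv : Eᵀ *ᵥ dv = d := by
    funext j
    rw [hd]
    simp [hE, hdv, Matrix.mulVec, dotProduct, Matrix.transpose_apply, Fin.sum_univ_three]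
    ring
  have hEwv : Eᵀ *ᵥ wv = w := by
    rw [hwv]
    funext j
    simp [hE, hwvv, Matrix.mulVec, dotProduct, Matrix.transpose_apply, Fin.sum_univ_three]
    ring
  have hconj : A⁻¹ * Q * A = Eᵀ * N * E := by
    have lhs1 : A⁻¹ * vecMulVec ehat ehat * A = vecMulVec d w := by
      rw [myMul_vecMulVec, myVecMulVec_mul, hAinve, hAt, hAe]
    have rhs1 : Eᵀ * vecMulVec dv wv * E = vecMulVec d w := by
      rw [myMul_vecMulVec, myVecMulVec_mul, hEdv, hEwv]
    rw [hQ, reflMat, hN]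
    calc A⁻¹ * (-1 + (2:ℝ) • vecMulVec ehat ehat) * A
        = -(A⁻¹ * A) + (2:ℝ) • (A⁻¹ * vecMulVec ehat ehat * A) := by
          simp only [Matrix.mul_add, Matrix.add_mul, Matrix.mul_neg, Matrix.neg_mul,
            Matrix.mul_one, Matrix.one_mul, Matrix.mul_smul, Matrix.smul_mul]
      _ = -1 + (2:ℝ) • vecMulVec d w := by rw [hAinvA, lhs1]
      _ = -(Eᵀ * E) + (2:ℝ) • (Eᵀ * vecMulVec dv wv * E) := by rw [hETE, rhs1]
      _ = Eᵀ * (-1 + (2:ℝ) • vecMulVec dv wv) * E := by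
          simp only [Matrix.mul_add, Matrix.add_mul, Matrix.mul_neg, Matrix.neg_mul,
            Matrix.mul_one, Matrix.one_mul, Matrix.mul_smul, Matrix.smul_mul]
  have hNNT : N * Nᵀ = D := by
    ext i j
    fin_cases i <;> fin_cases j <;>
      simp [hN, hdv, hwvv, hD, Matrix.mul_apply, Fin.sum_univ_three, vecMulVec_apply,
        Matrix.transpose_apply, Matrix.one_apply, Matrix.diagonal, Matrix.smul_apply,
        Matrix.add_apply, Matrix.neg_apply, hδ3] <;>
      (try (simp only [w1v, w3v, μ1v, μ3v]; field_simp [ht0, hδ1ne]; try ring))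
  -- assemble: Q (A A) Q = B B
  have hQA : Q * A = A * (Eᵀ * N * E) := by
    calc Q * A = A * (A⁻¹ * Q * A) := by
          rw [← Matrix.mul_assoc, ← Matrix.mul_assoc, hAAinv, Matrix.one_mul]
      _ = A * (Eᵀ * N * E) := by rw [hconj]
  have hAQ : A * Q = Eᵀ * Nᵀ * E * A := by
    have h := congrArg Matrix.transpose hQA
    rw [Matrix.transpose_mul, Matrix.transpose_mul, hAt, hQt] at h
    rw [h, Matrix.transpose_mul, Matrix.transpose_mul, Matrix.transpose_transpose]
    simp only [Matrix.mul_assoc]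
  have hQAAQ : Q * (A * A) * Q = B * B := by
    calc Q * (A * A) * Q = (Q * A) * (A * Q) := by simp only [Matrix.mul_assoc]
      _ = A * (Eᵀ * N * E) * (Eᵀ * Nᵀ * E * A) := by rw [hQA, hAQ]
      _ = A * (Eᵀ * (N * ((E * Eᵀ) * (Nᵀ * (E * A))))) := by simp only [Matrix.mul_assoc]
      _ = A * (Eᵀ * (N * Nᵀ * (E * A))) := by rw [hEET, Matrix.one_mul]; simp only [Matrix.mul_assoc]
      _ = A * (Eᵀ * D * E) * A := by rw [hNNT]; simp only [Matrix.mul_assoc]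
      _ = B * B := hB2.symm
  -- conclude by uniqueness of the positive square root
  have hQAQpsd : (Q * A * Q).PosSemidef := by
    have h := hA.posSemidef.mul_mul_conjTranspose_same Q
    rwa [Matrix.conjTranspose_eq_transpose_of_trivial, hQt] at h
  have hsq : (Q * A * Q) ^ 2 = B ^ 2 := by
    rw [pow_two, pow_two]
    calc Q * A * Q * (Q * A * Q) = Q * (A * ((Q * Q) * (A * Q))) := by
          simp only [Matrix.mul_assoc]
      _ = Q * (A * A) * Q := by rw [hQQ, Matrix.one_mul]; simp only [Matrix.mul_assoc]
      _ = B * B := hQAAQ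
  have hfin : Q * A * Q = B := by
    open scoped MatrixOrder Matrix.Norms.L2Operator in
    exact (CFC.sq_eq_sq_iff (Q * A * Q) B (Matrix.nonneg_iff_posSemidef.mpr hQAQpsd)
      (Matrix.nonneg_iff_posSemidef.mpr hB.posSemidef)).mp hsq
  exact ⟨hposgoal, hunit, hfin.symm⟩
end

section
/- Let U be a 3×3 real positive-definite symmetric matrix, Q a 3×3 real orthogonal matrix, and Û = Q U Qᵀ. Suppose there exist R̂ ∈ SO(3) and vectors a, n ∈ ℝ³ with R̂ Û = U + a ⊗ n. Then n · (U⁻¹ a) = 0 and 2 n · (U a) + |a|² |n|² = 0. -/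
open Matrix

theorem stmt_18 (U Q Uhat : Matrix (Fin 3) (Fin 3) ℝ)
    (hU : U.PosDef) (hQ : Q * Qᵀ = 1) (hUhat : Uhat = Q * U * Qᵀ)
    (Rhat : Matrix (Fin 3) (Fin 3) ℝ) (hRhat : SO3 Rhat)
    (a n : Fin 3 → ℝ)
    (hcomp : Rhat * Uhat = U + Matrix.vecMulVec a n) :
    n ⬝ᵥ U⁻¹.mulVec a = 0 ∧
    2 * (n ⬝ᵥ U.mulVec a) + (a ⬝ᵥ a) * (n ⬝ᵥ n) = 0 := by
  have hUs : Uᵀ = U := by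
    have := hU.1
    simpa [Matrix.IsHermitian, Matrix.conjTranspose_eq_transpose_of_trivial] using this
  have hdetU : U.det ≠ 0 := ne_of_gt hU.det_pos
  have hQ' : Qᵀ * Q = 1 := mul_eq_one_comm.mp hQ
  have hR' : Rhatᵀ * Rhat = 1 := mul_eq_one_comm.mp hRhat.1
  -- determinant part
  have hdetUhat : Uhat.det = U.det := by
    rw [hUhat, det_mul, det_mul, det_transpose]
    have : Q.det * Q.det = 1 := by
      have := congrArg Matrix.det hQ
      simpa [det_mul] using this
    linear_combination U.det * this
  have hdet : (U + Matrix.vecMulVec a n).det = U.det := by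
    rw [← hcomp, det_mul, hRhat.2, one_mul, hdetUhat]
  have hdl : (U + Matrix.vecMulVec a n).det
      = U.det * (1 + n ⬝ᵥ U⁻¹.mulVec a) := by
    rw [Matrix.vecMulVec_eq Unit,
      Matrix.det_add_replicateCol_mul_replicateRow (isUnit_iff_ne_zero.mpr hdetU) a n]
    congr 1
    rw [Matrix.det_unique]
    simp only [Matrix.add_apply, Matrix.one_apply_eq, Matrix.mul_apply,
      Matrix.replicateRow_apply, Matrix.replicateCol_apply, Matrix.mulVec, dotProduct,
      Fin.sum_univ_three, Finset.sum_const, Finset.card_univ]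
    simp
    ring
  have h1 : n ⬝ᵥ U⁻¹.mulVec a = 0 := by
    rw [hdl] at hdet
    have := mul_left_cancel₀ hdetU (by linarith [hdet] : U.det * (1 + n ⬝ᵥ U⁻¹.mulVec a) = U.det * 1)
    linarith
  refine ⟨h1, ?_⟩
  -- trace part
  have heq : Uhat * Uhat = (U + Matrix.vecMulVec a n)ᵀ * (U + Matrix.vecMulVec a n) := by
    have hUhs : Uhatᵀ = Uhat := by
      rw [hUhat]
      simp [Matrix.transpose_mul, hUs, Matrix.mul_assoc]
    calc Uhat * Uhat = Uhatᵀ * (Rhatᵀ * Rhat) * Uhat := by rw [hR', hUhs, Matrix.mul_one]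
    _ = (Rhat * Uhat)ᵀ * (Rhat * Uhat) := by
        simp [Matrix.transpose_mul, Matrix.mul_assoc]
    _ = _ := by rw [hcomp]
  have htr : (U * U).trace = ((U + Matrix.vecMulVec a n)ᵀ * (U + Matrix.vecMulVec a n)).trace := by
    rw [← heq, hUhat]
    have e : Q * U * Qᵀ * (Q * U * Qᵀ) = Q * (U * U) * Qᵀ := by
      calc Q * U * Qᵀ * (Q * U * Qᵀ) = Q * U * ((Qᵀ * Q) * (U * Qᵀ)) := by
            simp only [Matrix.mul_assoc]
      _ = Q * (U * U) * Qᵀ := by rw [hQ', one_mul]; simp only [Matrix.mul_assoc]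
    rw [e, Matrix.trace_mul_cycle, hQ', one_mul]
  have hs : ∀ i j, U j i = U i j := by
    intro i j
    have := congrFun (congrFun hUs i) j
    simpa using this
  simp only [Matrix.trace, Matrix.diag, Matrix.mul_apply, Matrix.transpose_apply,
    Matrix.add_apply, Matrix.vecMulVec_apply, Fin.sum_univ_three] at htr
  simp only [dotProduct, Matrix.mulVec, Matrix.mulVecLin_apply, Fin.sum_univ_three, dotProduct]
  rw [hs 0 1, hs 0 2, hs 1 2] at htr ⊢
  linear_combination -htr
end

section
/- Let U be a 3×3 real positive-definite symmetric matrix and let a, n ∈ ℝ³ satisfy n · (U⁻¹ a) = 0 and 2 n · (U a) + |a|² |n|² = 0. Fix f ∈ ℝ and set C(f) = (U + f n⊗a)(U + f a⊗n). Then det C(f) = det(U²), and if the eigenvalues of C(f), counted with multiplicity, are 1, p, q, then p q = det(U²) and (1 − p)(q − 1) = tr(U²) − det(U²) + (f² − f) |a|² |n|² − 2. -/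
open Matrix Polynomial

theorem stmt_19 (U : Matrix (Fin 3) (Fin 3) ℝ) (hU : U.PosDef)
    (a n : Fin 3 → ℝ)
    (h1 : n ⬝ᵥ U⁻¹.mulVec a = 0)
    (h2 : 2 * (n ⬝ᵥ U.mulVec a) + (a ⬝ᵥ a) * (n ⬝ᵥ n) = 0)
    (f : ℝ) :
    ((U + f • Matrix.vecMulVec n a) * (U + f • Matrix.vecMulVec a n)).det
      = (U * U).det ∧
    ∀ p q : ℝ,
      ((U + f • Matrix.vecMulVec n a) * (U + f • Matrix.vecMulVec a n)).charpoly
        = (X - C 1) * (X - C p) * (X - C q) →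
      p * q = (U * U).det ∧
      (1 - p) * (q - 1)
        = (U * U).trace - (U * U).det + (f ^ 2 - f) * (a ⬝ᵥ a) * (n ⬝ᵥ n) - 2 := by
  set M := (U + f • Matrix.vecMulVec n a) * (U + f • Matrix.vecMulVec a n) with hM
  have hdetU : IsUnit U.det := isUnit_iff_ne_zero.2 (ne_of_gt hU.det_pos)
  have hUs : Uᵀ = U := by
    have := hU.isHermitian
    simpa [Matrix.IsHermitian, conjTranspose_eq_transpose_of_trivial] using this
  have hsymm : U⁻¹ᵀ = U⁻¹ := by
    have := hU.isHermitian.inv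
    simpa [Matrix.IsHermitian, conjTranspose_eq_transpose_of_trivial] using this
  have h1' : a ⬝ᵥ U⁻¹.mulVec n = 0 := by
    rw [dotProduct_mulVec, ← hsymm, vecMul_transpose, dotProduct_comm]
    exact h1
  -- determinant computation
  have h1e := h1; have h1e' := h1'
  simp only [dotProduct, mulVec, Fin.sum_univ_three] at h1e h1e'
  have hv1 : f • Matrix.vecMulVec n a = replicateCol Unit (f • n) * replicateRow Unit a := by
    rw [← vecMulVec_eq]; ext i j; simp [vecMulVec_apply, mul_assoc]
  have hv2 : f • Matrix.vecMulVec a n = replicateCol Unit (f • a) * replicateRow Unit n := by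
    rw [← vecMulVec_eq]; ext i j; simp [vecMulVec_apply, mul_assoc]
  have hd1 : (U + f • Matrix.vecMulVec n a).det = U.det := by
    rw [hv1, det_add_replicateCol_mul_replicateRow hdetU]
    simp only [det_unique, Matrix.mul_apply, Fin.sum_univ_three, replicateRow_apply, replicateCol_apply,
      Matrix.add_apply, Pi.smul_apply, Matrix.one_apply_eq, smul_eq_mul]
    linear_combination U.det * f * h1e'
  have hd2 : (U + f • Matrix.vecMulVec a n).det = U.det := by
    rw [hv2, det_add_replicateCol_mul_replicateRow hdetU]
    simp only [det_unique, Matrix.mul_apply, Fin.sum_univ_three, replicateRow_apply, replicateCol_apply,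
      Matrix.add_apply, Pi.smul_apply, Matrix.one_apply_eq, smul_eq_mul]
    linear_combination U.det * f * h1e
  have hdet : M.det = (U * U).det := by
    rw [hM, det_mul, det_mul, hd1, hd2]
  -- trace computation
  have htr : M.trace = (U * U).trace + (f ^ 2 - f) * (a ⬝ᵥ a) * (n ⬝ᵥ n) := by
    have hs01 : U 0 1 = U 1 0 := (congrFun (congrFun hUs 0) 1).symm
    have hs02 : U 0 2 = U 2 0 := (congrFun (congrFun hUs 0) 2).symm
    have hs12 : U 1 2 = U 2 1 := (congrFun (congrFun hUs 1) 2).symm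
    have h2e := h2
    simp only [dotProduct, mulVec, Fin.sum_univ_three] at h2e ⊢
    simp only [hM, Matrix.trace, Matrix.diag, Matrix.mul_apply, Matrix.add_apply,
      Matrix.smul_apply, vecMulVec_apply, smul_eq_mul, Fin.sum_univ_three]
    linear_combination f * h2e + f*(a 0*n 1 - a 1*n 0)*hs01 + f*(a 0*n 2 - a 2*n 0)*hs02
      + f*(a 1*n 2 - a 2*n 1)*hs12
  refine ⟨hdet, fun p q hpq => ?_⟩
  have hexp : ((X - C 1) * (X - C p) * (X - C q) : Polynomial ℝ)
      = X^3 - C (1+p+q) * X^2 + C (p+q+p*q) * X - C (p*q) := by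
    simp only [C_add, C_mul, C_1]; ring
  have hc0 : M.charpoly.coeff 0 = -(p*q) := by
    rw [hpq, hexp]
    simp only [coeff_add, coeff_sub, coeff_X_pow, coeff_C, coeff_C_mul, coeff_X]
    norm_num
  have hc2 : M.charpoly.coeff 2 = -(1+p+q) := by
    rw [hpq, hexp]
    simp only [coeff_add, coeff_sub, coeff_X_pow, coeff_C, coeff_C_mul, coeff_X]
    norm_num
  have hdetc : M.det = p * q := by
    rw [Matrix.det_eq_sign_charpoly_coeff, hc0]
    norm_num
  have htrc : M.trace = 1 + p + q := by
    have := Matrix.trace_eq_neg_charpoly_coeff M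
    rw [this]
    norm_num [hc2]
  constructor
  · rw [← hdetc, hdet]
  · have e1 : p * q = (U * U).det := by rw [← hdetc, hdet]
    have e2 : 1 + p + q = (U * U).trace + (f ^ 2 - f) * (a ⬝ᵥ a) * (n ⬝ᵥ n) := by
      rw [← htrc, htr]
    linear_combination e2 - e1
end
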